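/- Let T > 0, let f : ℝ → ℝ be a continuous T-periodic function that is not identically zero, and let α ∈ (0,1). Then the Riemann–Liouville fractional integral I^α f (as a function on (0,∞)) is not T-periodic; that is, there exists t > 0 with I^α f(t+T) ≠ I^α f(t). -/

import Mathlib

open MeasureTheory intervalIntegral

private lemma rl_rpow_le_max {c d y γ : ℝ} (hc : 0 < c) (h1 : c ≤ y) (h2 : y ≤ d) :
    y ^ γ ≤ max (c ^ γ) (d ^ γ) := by
  rcases le_or_gt 0 γ with hγ | hγ
  · exact le_max_of_le_right (Real.rpow_le_rpow (hc.le.trans h1) h2 hγ)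
  · exact le_max_of_le_left (Real.rpow_le_rpow_of_nonpos hc h1 hγ.le)

private lemma rl_integrable_ker {f : ℝ → ℝ} (hf : Continuous f) {β : ℝ} (hβ : (-1:ℝ) < β)
    (t a b : ℝ) :
    IntervalIntegrable (fun u => (t - u) ^ β * f u) volume a b := by
  have h1 : IntervalIntegrable (fun u : ℝ => (t - u) ^ β) volume a b := by
    have := (intervalIntegrable_rpow' hβ (a := t - a) (b := t - b)).comp_sub_left t
    simpa using this
  exact h1.mul_continuousOn hf.continuousOn

private lemma rl_hasDerivAt_param {T : ℝ} (hT : 0 < T) {f : ℝ → ℝ} (hf : Continuous f)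
    (β : ℝ) {t : ℝ} (ht : 0 < t) :
    HasDerivAt (fun x => ∫ u in (-T)..(0:ℝ), (x - u) ^ β * f u)
      (∫ u in (-T)..(0:ℝ), (β * (t - u) ^ (β - 1)) * f u) t := by
  obtain ⟨M, hM⟩ := (isCompact_Icc (a := -T) (b := (0:ℝ))).exists_bound_of_continuousOn
    hf.continuousOn
  have hM0 : 0 ≤ M := le_trans (norm_nonneg _) (hM 0 ⟨by linarith, le_refl 0⟩)
  set C : ℝ := max ((t/2) ^ (β - 1)) ((2*t + T) ^ (β - 1)) with hC
  have ht2 : 0 < t/2 := by positivity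
  have hC0 : 0 ≤ C := le_max_of_le_left (Real.rpow_nonneg ht2.le _)
  have hIoc : Set.uIoc (-T) (0:ℝ) = Set.Ioc (-T) 0 := Set.uIoc_of_le (by linarith)
  have key : ∀ u ∈ Set.Ioc (-T) (0:ℝ), ∀ x ∈ Metric.ball t (t/2),
      t/2 < x - u ∧ x - u ≤ 2*t + T := by
    intro u hu x hx
    rw [Metric.mem_ball, Real.dist_eq, abs_lt] at hx
    constructor
    · nlinarith [hu.2]
    · nlinarith [hu.1]
  have hmeasF : ∀ x ∈ Metric.ball t (t/2),
      AEStronglyMeasurable (fun u => (x - u) ^ β * f u) (volume.restrict (Set.uIoc (-T) (0:ℝ))) := by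
    intro x hx
    have hco : ContinuousOn (fun u : ℝ => (x - u) ^ β * f u) (Set.Ioc (-T) 0) := by
      apply ContinuousOn.mul _ hf.continuousOn
      apply (continuousOn_const.sub continuousOn_id).rpow_const
      intro u hu
      exact Or.inl (by have := (key u hu x hx).1; intro h; simp only [Pi.sub_apply, id] at h; linarith)
    rw [hIoc]
    exact hco.aestronglyMeasurable measurableSet_Ioc
  have hball : t ∈ Metric.ball t (t/2) := Metric.mem_ball_self ht2
  have main := intervalIntegral.hasDerivAt_integral_of_dominated_loc_of_deriv_le
    (F := fun (x : ℝ) (u : ℝ) => (x - u) ^ β * f u)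
    (F' := fun (x : ℝ) (u : ℝ) => (β * (x - u) ^ (β - 1)) * f u)
    (x₀ := t) (s := Metric.ball t (t/2)) (a := -T) (b := (0:ℝ)) (μ := volume)
    (bound := fun _ => |β| * C * M) (Metric.ball_mem_nhds t ht2)
    (Filter.eventually_of_mem (Metric.ball_mem_nhds t ht2) hmeasF)
    ?_ ?_ ?_ ?_ ?_
  · exact main.2
  · -- integrability of F t
    apply ContinuousOn.intervalIntegrable
    rw [Set.uIcc_of_le (by linarith : (-T:ℝ) ≤ 0)]
    apply ContinuousOn.mul _ hf.continuousOn
    apply (continuousOn_const.sub continuousOn_id).rpow_const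
    intro u hu
    exact Or.inl (by intro h; simp only [Pi.sub_apply, id] at h; linarith [hu.2])
  · -- measurability of F' t
    have hco : ContinuousOn (fun u : ℝ => (β * (t - u) ^ (β - 1)) * f u) (Set.Ioc (-T) 0) := by
      apply ContinuousOn.mul _ hf.continuousOn
      apply ContinuousOn.mul continuousOn_const
      apply (continuousOn_const.sub continuousOn_id).rpow_const
      intro u hu
      exact Or.inl (by have := (key u hu t hball).1; intro h; simp only [Pi.sub_apply, id] at h; linarith)
    rw [hIoc]
    exact hco.aestronglyMeasurable measurableSet_Ioc
  · -- bound
    apply Filter.Eventually.of_forall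
    intro u hu x hx
    rw [hIoc] at hu
    obtain ⟨h1, h2⟩ := key u hu x hx
    have hxu : 0 < x - u := lt_trans ht2 h1
    have hrle : (x - u) ^ (β - 1) ≤ C := rl_rpow_le_max ht2 h1.le h2
    have hrpos : 0 < (x - u) ^ (β - 1) := Real.rpow_pos_of_pos hxu _
    have hfu : ‖f u‖ ≤ M := hM u ⟨hu.1.le, hu.2⟩
    calc ‖(β * (x - u) ^ (β - 1)) * f u‖
        = |β| * (x - u) ^ (β - 1) * ‖f u‖ := by
          rw [norm_mul, norm_mul]
          simp [Real.norm_eq_abs, abs_of_pos hrpos]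
      _ ≤ |β| * C * M := by
          apply mul_le_mul (mul_le_mul le_rfl hrle hrpos.le (abs_nonneg β)) hfu (norm_nonneg _)
          positivity
  · exact intervalIntegrable_const
  · -- differentiability
    apply Filter.Eventually.of_forall
    intro u hu x hx
    rw [hIoc] at hu
    have hxu : 0 < x - u := lt_trans ht2 (key u hu x hx).1
    have h1 : HasDerivAt (fun y : ℝ => y - u) 1 x := (hasDerivAt_id x).sub_const u
    have h2 : HasDerivAt (fun y : ℝ => y ^ β) (β * (x - u) ^ (β - 1)) (x - u) :=
      Real.hasDerivAt_rpow_const (Or.inl hxu.ne')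
    have h3 := (h2.comp x h1).mul_const (f u)
    simpa [Function.comp] using h3

private lemma rl_all_orders {T : ℝ} (hT : 0 < T) {f : ℝ → ℝ} (hf : Continuous f)
    {α : ℝ} (hα : α ∈ Set.Ioo (0:ℝ) 1)
    (base : ∀ t : ℝ, 0 < t → ∫ u in (-T)..(0:ℝ), (t - u) ^ (α - 1) * f u = 0) :
    ∀ n : ℕ, ∀ t : ℝ, 0 < t → ∫ u in (-T)..(0:ℝ), (t - u) ^ (α - 1 - n) * f u = 0 := by
  intro n
  induction n with
  | zero => simpa using base
  | succ n ih =>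
    intro t ht
    have hD := rl_hasDerivAt_param hT hf (α - 1 - n) ht
    have hzero : (fun x : ℝ => ∫ u in (-T)..(0:ℝ), (x - u) ^ (α - 1 - (n:ℝ)) * f u)
        =ᶠ[nhds t] (fun _ => (0:ℝ)) :=
      Filter.eventuallyEq_of_mem (Ioi_mem_nhds ht) (fun x hx => ih x hx)
    have hD0 : HasDerivAt (fun x : ℝ => ∫ u in (-T)..(0:ℝ), (x - u) ^ (α - 1 - (n:ℝ)) * f u) 0 t :=
      (hasDerivAt_const t (0:ℝ)).congr_of_eventuallyEq hzero
    have huniq := hD.unique hD0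
    have hrw : (fun u : ℝ => ((α - 1 - (n:ℝ)) * (t - u) ^ (α - 1 - (n:ℝ) - 1)) * f u)
        = fun u : ℝ => (α - 1 - (n:ℝ)) * ((t - u) ^ (α - 1 - ((n:ℕ)+1:ℕ)) * f u) := by
      funext u
      have : α - 1 - (n:ℝ) - 1 = α - 1 - (((n:ℕ)+1:ℕ):ℝ) := by push_cast; ring
      rw [this, mul_assoc]
    rw [hrw, intervalIntegral.integral_const_mul] at huniq
    have hne : α - 1 - (n:ℝ) ≠ 0 := by
      have h1 := hα.2
      have h2 : (0:ℝ) ≤ n := Nat.cast_nonneg n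
      intro h; nlinarith
    exact (mul_eq_zero.mp huniq).resolve_left hne

private lemma rl_moments_zero {a b : ℝ} (hab : a < b) {ψ : ℝ → ℝ}
    (hψ : ContinuousOn ψ (Set.Icc a b))
    (h : ∀ n : ℕ, ∫ w in a..b, w ^ n * ψ w = 0) :
    ∀ w ∈ Set.Ioo a b, ψ w = 0 := by
  have huIcc : Set.uIcc a b = Set.Icc a b := Set.uIcc_of_le hab.le
  have hψI : IntervalIntegrable ψ volume a b := by
    apply ContinuousOn.intervalIntegrable; rwa [huIcc]
  have hψu : ContinuousOn ψ (Set.uIcc a b) := by rwa [huIcc]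
  have hmono : ∀ i : ℕ, IntervalIntegrable (fun w => w ^ i * ψ w) volume a b :=
    fun i => hψI.continuousOn_mul (continuous_pow i).continuousOn
  have hpoly : ∀ p : Polynomial ℝ, ∫ w in a..b, p.eval w * ψ w = 0 := by
    intro p
    have hrw : (fun w => p.eval w * ψ w)
        = fun w => ∑ i ∈ Finset.range (p.natDegree + 1), p.coeff i * (w ^ i * ψ w) := by
      funext w
      rw [Polynomial.eval_eq_sum_range, Finset.sum_mul]
      exact Finset.sum_congr rfl fun i _ => by ring
    rw [hrw, intervalIntegral.integral_finset_sum
      (fun i _ => (hmono i).const_mul (p.coeff i))]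
    apply Finset.sum_eq_zero
    intro i _
    rw [intervalIntegral.integral_const_mul, h i, mul_zero]
  obtain ⟨M, hM⟩ := (isCompact_Icc (a := a) (b := b)).exists_bound_of_continuousOn hψ
  have hM0 : 0 ≤ M := le_trans (norm_nonneg _) (hM a ⟨le_refl _, hab.le⟩)
  have hψ2I : IntervalIntegrable (fun w => ψ w * ψ w) volume a b := hψI.continuousOn_mul hψu
  set Ψ : C(Set.Icc a b, ℝ) := ⟨(Set.Icc a b).restrict ψ, hψ.restrict⟩ with hΨ
  have hsq : ∫ w in a..b, ψ w * ψ w = 0 := by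
    have key : ∀ ε : ℝ, 0 < ε → |∫ w in a..b, ψ w * ψ w| ≤ ε * (M * (b - a)) := by
      intro ε hε
      obtain ⟨p, hp⟩ := exists_polynomial_near_continuousMap a b Ψ ε hε
      have h1 : ∫ w in a..b, ψ w * ψ w = ∫ w in a..b, (ψ w - p.eval w) * ψ w := by
        have hrw : (fun w => (ψ w - p.eval w) * ψ w)
            = fun w => ψ w * ψ w - p.eval w * ψ w := by funext w; ring
        rw [hrw, intervalIntegral.integral_sub hψ2I
          (hψI.continuousOn_mul (p.continuous).continuousOn), hpoly p, sub_zero]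
      rw [h1]
      have hbd : ∀ x ∈ Set.uIoc a b, ‖(ψ x - p.eval x) * ψ x‖ ≤ ε * M := by
        intro x hx
        rw [Set.uIoc_of_le hab.le] at hx
        have hxI : x ∈ Set.Icc a b := ⟨hx.1.le, hx.2⟩
        have h2 : |ψ x - p.eval x| ≤ ‖p.toContinuousMapOn (Set.Icc a b) - Ψ‖ := by
          have := (p.toContinuousMapOn (Set.Icc a b) - Ψ).norm_coe_le_norm ⟨x, hxI⟩
          rw [abs_sub_comm]; simp [hΨ, Real.norm_eq_abs] at this; exact this
        have h3 : |ψ x - p.eval x| ≤ ε := le_of_lt (lt_of_le_of_lt h2 hp)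
        rw [norm_mul]
        apply mul_le_mul h3 (hM x hxI) (norm_nonneg _) hε.le
      have := intervalIntegral.norm_integral_le_of_norm_le_const hbd
      rw [abs_of_pos (by linarith : (0:ℝ) < b - a)] at this
      calc |∫ w in a..b, (ψ w - p.eval w) * ψ w| ≤ ε * M * (b - a) := this
        _ = ε * (M * (b - a)) := by ring
    have habs : |∫ w in a..b, ψ w * ψ w| ≤ 0 := by
      apply le_of_forall_pos_le_add
      intro δ hδ
      have hK : (0:ℝ) ≤ M * (b - a) := by nlinarith
      have h1 := key (δ / (M * (b - a) + 1)) (by positivity)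
      have h2 : δ / (M * (b - a) + 1) * (M * (b - a)) ≤ δ := by
        rw [div_mul_eq_mul_div, div_le_iff₀ (by linarith)]
        nlinarith [hδ, hK]
      linarith
    exact abs_nonpos_iff.mp habs
  intro w hw
  by_contra hw0
  have hcA : ContinuousAt ψ w := hψ.continuousAt (Icc_mem_nhds hw.1 hw.2)
  have hcA2 : ContinuousAt (fun x => ψ x * ψ x) w := hcA.mul hcA
  set m : ℝ := ψ w * ψ w with hm
  have hmpos : 0 < m := by
    have := mul_self_nonneg (ψ w)
    rcases this.lt_or_eq with h | h
    · exact h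
    · exact absurd (by nlinarith [sq_abs (ψ w)] : ψ w = 0) hw0
  have hev : ∀ᶠ x in nhds w, m/2 < ψ x * ψ x := hcA2 (Ioi_mem_nhds (by linarith))
  rw [Metric.eventually_nhds_iff] at hev
  obtain ⟨δ, hδ, hδev⟩ := hev
  set δ' : ℝ := min δ (min (w - a) (b - w)) with hδ'
  have hδ'pos : 0 < δ' := lt_min hδ (lt_min (by linarith [hw.1]) (by linarith [hw.2]))
  set c1 : ℝ := w - δ'/2 with hc1
  set c2 : ℝ := w + δ'/2 with hc2
  have hc1c2 : c1 ≤ c2 := by simp only [hc1, hc2]; linarith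
  have hac1 : a ≤ c1 := by
    have : δ' ≤ w - a := le_trans (min_le_right _ _) (min_le_left _ _)
    simp only [hc1]; linarith
  have hc2b : c2 ≤ b := by
    have : δ' ≤ b - w := le_trans (min_le_right _ _) (min_le_right _ _)
    simp only [hc2]; linarith
  have hsub1 : Set.uIcc a c1 ⊆ Set.uIcc a b := by
    rw [Set.uIcc_of_le (by linarith), Set.uIcc_of_le hab.le]
    exact Set.Icc_subset_Icc le_rfl (by linarith)
  have hsub2 : Set.uIcc c1 c2 ⊆ Set.uIcc a b := by
    rw [Set.uIcc_of_le hc1c2, Set.uIcc_of_le hab.le]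
    exact Set.Icc_subset_Icc hac1 hc2b
  have hsub3 : Set.uIcc c2 b ⊆ Set.uIcc a b := by
    rw [Set.uIcc_of_le hc2b, Set.uIcc_of_le hab.le]
    exact Set.Icc_subset_Icc (by linarith) le_rfl
  have hI1 : IntervalIntegrable (fun w => ψ w * ψ w) volume a c1 := hψ2I.mono_set hsub1
  have hI2 : IntervalIntegrable (fun w => ψ w * ψ w) volume c1 c2 := hψ2I.mono_set hsub2
  have hI3 : IntervalIntegrable (fun w => ψ w * ψ w) volume c2 b := hψ2I.mono_set hsub3
  have hadd1 := intervalIntegral.integral_add_adjacent_intervals hI1 hI2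
  have hadd2 := intervalIntegral.integral_add_adjacent_intervals (hI1.trans hI2) hI3
  have hnn1 : 0 ≤ ∫ x in a..c1, ψ x * ψ x :=
    intervalIntegral.integral_nonneg hac1 (fun u _ => mul_self_nonneg _)
  have hnn3 : 0 ≤ ∫ x in c2..b, ψ x * ψ x :=
    intervalIntegral.integral_nonneg hc2b (fun u _ => mul_self_nonneg _)
  have hlow : (c2 - c1) * (m/2) ≤ ∫ x in c1..c2, ψ x * ψ x := by
    have hconst : ∫ _x in c1..c2, (m/2 : ℝ) = (c2 - c1) * (m/2) := by
      rw [intervalIntegral.integral_const, smul_eq_mul]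
    rw [← hconst]
    apply intervalIntegral.integral_mono_on hc1c2 intervalIntegrable_const hI2
    intro x hx
    have hdist : dist x w < δ := by
      rw [Real.dist_eq, abs_lt]
      have h1 := hx.1; have h2 := hx.2
      have : δ'/2 < δ := lt_of_lt_of_le (half_lt_self hδ'pos) (min_le_left _ _)
      constructor <;> simp only [hc1, hc2] at h1 h2 <;> linarith
    exact (hδev hdist).le
  have hc21 : c2 - c1 = δ' := by simp only [hc1, hc2]; ring
  nlinarith [hsq, hadd1, hadd2]

/-- The Riemann–Liouville fractional integral of order `α` cannot be `T`-periodic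
when `f` is a nonzero continuous `T`-periodic function and `α ∈ (0,1)`. -/
theorem rl_integral_not_periodic (T : ℝ) (hT : 0 < T) (f : ℝ → ℝ)
    (hf : Continuous f) (hper : Function.Periodic f T) (hne : f ≠ 0)
    (α : ℝ) (hα : α ∈ Set.Ioo (0 : ℝ) 1) :
    ∃ t : ℝ, 0 < t ∧
      (1 / Real.Gamma α) * ∫ s in (0 : ℝ)..(t + T), (t + T - s) ^ (α - 1) * f s ≠
      (1 / Real.Gamma α) * ∫ s in (0 : ℝ)..t, (t - s) ^ (α - 1) * f s := by
  by_contra hcon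
  push_neg at hcon
  have hΓ : (1 / Real.Gamma α) ≠ 0 := one_div_ne_zero (Real.Gamma_pos_of_pos hα.1).ne'
  have hαβ : (-1:ℝ) < α - 1 := by linarith [hα.1]
  -- Step A: the "tail" integral vanishes for all t > 0
  have base : ∀ t : ℝ, 0 < t → ∫ u in (-T)..(0:ℝ), (t - u) ^ (α - 1) * f u = 0 := by
    intro t ht
    have heq := mul_left_cancel₀ hΓ (hcon t ht)
    have hsub : (∫ s in (0:ℝ)..(t + T), (t + T - s) ^ (α - 1) * f s)
        = ∫ u in (-T)..t, (t - u) ^ (α - 1) * f u := by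
      have h0 := intervalIntegral.integral_comp_add_right (a := -T) (b := t)
        (fun s => (t + T - s) ^ (α - 1) * f s) T
      rw [show -T + T = (0:ℝ) from by ring] at h0
      rw [← h0]
      congr 1
      funext x
      rw [hper x, show t + T - (x + T) = t - x from by ring]
    have hsplit := intervalIntegral.integral_add_adjacent_intervals
      (rl_integrable_ker hf hαβ t (-T) 0) (rl_integrable_ker hf hαβ t 0 t)
    rw [hsub] at heq
    linarith [hsplit, heq]
  -- Step B/C: all fractional orders vanish
  have hall := rl_all_orders hT hf hα base
  -- Step D: change of variables to moments
  set a : ℝ := (1 + T)⁻¹ with ha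
  have h1T : (0:ℝ) < 1 + T := by linarith
  have hapos : 0 < a := by positivity
  have ha1 : a < 1 := by
    rw [ha]
    rw [inv_lt_one₀ h1T]
    linarith
  have hainv : a⁻¹ = 1 + T := by rw [ha, inv_inv]
  set ψ : ℝ → ℝ := fun w => w ^ (-1 - α) * f (1 - w⁻¹) with hψdef
  have hmom : ∀ n : ℕ, ∫ w in a..(1:ℝ), w ^ n * ψ w = 0 := by
    intro n
    have hwpos : ∀ w ∈ Set.uIcc a (1:ℝ), 0 < w := by
      intro w hw
      rw [Set.uIcc_of_le ha1.le] at hw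
      linarith [hw.1]
    have hderiv : ∀ w ∈ Set.uIcc a (1:ℝ),
        HasDerivAt (fun w : ℝ => 1 - w⁻¹) ((w^2)⁻¹) w := by
      intro w hw
      have hw0 : w ≠ 0 := (hwpos w hw).ne'
      have := (hasDerivAt_inv hw0).const_sub 1
      simpa using this
    have hcont' : ContinuousOn (fun w : ℝ => (w^2)⁻¹) (Set.uIcc a (1:ℝ)) := by
      apply ContinuousOn.inv₀ (continuous_pow 2).continuousOn
      intro w hw
      exact pow_ne_zero 2 (hwpos w hw).ne'
    have hg : ContinuousOn (fun u : ℝ => (1 - u) ^ (α - 1 - (n:ℝ)) * f u)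
        ((fun w : ℝ => 1 - w⁻¹) '' Set.uIcc a 1) := by
      apply ContinuousOn.mul _ hf.continuousOn
      apply (continuousOn_const.sub continuousOn_id).rpow_const
      rintro u ⟨w, hw, rfl⟩
      left
      simp only [Pi.sub_apply, id, sub_sub_cancel]
      exact inv_ne_zero (hwpos w hw).ne'
    have hcv := intervalIntegral.integral_comp_smul_deriv' hderiv hcont' hg
    have hends : (1:ℝ) - a⁻¹ = -T ∧ (1:ℝ) - (1:ℝ)⁻¹ = 0 := by
      constructor
      · rw [hainv]; ring
      · norm_num
    rw [hends.1, hends.2] at hcv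
    have hrhs : (∫ u in (-T)..(0:ℝ), (1 - u) ^ (α - 1 - (n:ℝ)) * f u) = 0 := by
      have := hall n 1 one_pos
      have hcg : ∀ u : ℝ, (1:ℝ) - u = 1 - u := fun _ => rfl
      simpa using this
    rw [hrhs] at hcv
    -- now rewrite the LHS of hcv into moment form
    rw [← hcv]
    apply intervalIntegral.integral_congr
    intro w hw
    have hw0 : 0 < w := hwpos w hw
    simp only [smul_eq_mul, Function.comp, hψdef]
    rw [show (1:ℝ) - (1 - w⁻¹) = w⁻¹ from by ring]
    have e1 : (w⁻¹) ^ (α - 1 - (n:ℝ)) = w ^ (-(α - 1 - (n:ℝ))) := by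
      rw [Real.inv_rpow hw0.le, ← Real.rpow_neg hw0.le]
    have e2 : (w^2)⁻¹ = w ^ (-2:ℝ) := by
      rw [show ((-2:ℝ)) = -((2:ℕ):ℝ) from by norm_num, Real.rpow_neg hw0.le,
        Real.rpow_natCast]
    have e3 : (w:ℝ) ^ n = w ^ ((n:ℕ):ℝ) := (Real.rpow_natCast w n).symm
    rw [e1, e2]
    rw [show w ^ (-2:ℝ) * (w ^ (-(α - 1 - (n:ℝ))) * f (1 - w⁻¹))
        = (w ^ (-2:ℝ) * w ^ (-(α - 1 - (n:ℝ)))) * f (1 - w⁻¹) from by ring]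
    rw [← Real.rpow_add hw0]
    rw [show w ^ n * (w ^ (-1 - α) * f (1 - w⁻¹))
        = ((w:ℝ) ^ n * w ^ (-1 - α)) * f (1 - w⁻¹) from by ring]
    rw [e3, ← Real.rpow_add hw0]
    congr 2
    ring
  have hψcont : ContinuousOn ψ (Set.Icc a 1) := by
    apply ContinuousOn.mul
    · apply (continuousOn_id (s := Set.Icc a (1:ℝ))).rpow_const
      intro w hw
      exact Or.inl (by simp only [id]; intro h; rw [h] at hw; exact absurd hw.1 (by linarith))
    · apply hf.comp_continuousOn
      apply continuousOn_const.sub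
      apply ContinuousOn.inv₀ continuousOn_id
      intro w hw
      simp only [id]
      intro h; rw [h] at hw; exact absurd hw.1 (by linarith)
  have hψ0 := rl_moments_zero ha1 hψcont hmom
  -- f vanishes on Ioo (-T) 0
  have hfIoo : Set.EqOn f 0 (Set.Ioo (-T) 0) := by
    intro u hu
    set w : ℝ := (1 - u)⁻¹ with hwdef
    have h1u : (1:ℝ) < 1 - u := by linarith [hu.2]
    have h1uT : 1 - u < 1 + T := by linarith [hu.1]
    have hwpos : 0 < w := by rw [hwdef]; positivity
    have hw1 : w < 1 := by rw [hwdef]; exact inv_lt_one_of_one_lt₀ h1u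
    have hwa : a < w := by
      rw [hwdef, ha]
      exact (inv_lt_inv₀ (by linarith) (by linarith)).2 h1uT
    have hψw := hψ0 w ⟨hwa, hw1⟩
    have hwu : 1 - w⁻¹ = u := by rw [hwdef, inv_inv]; ring
    rw [hψdef] at hψw
    simp only at hψw
    rw [hwu] at hψw
    have hrpos : 0 < w ^ (-1 - α) := Real.rpow_pos_of_pos hwpos _
    have : f u = 0 := by
      rcases mul_eq_zero.mp hψw with h | h
      · exact absurd h hrpos.ne'
      · exact h
    simpa using this
  -- extend to Icc by continuity, then everywhere by periodicity
  have hfIcc : Set.EqOn f 0 (Set.Icc (-T) 0) := by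
    have := hfIoo.closure hf continuous_const
    rwa [closure_Ioo (by linarith : (-T:ℝ) ≠ 0)] at this
  apply hne
  funext x
  obtain ⟨y, hy, hxy⟩ := hper.exists_mem_Ico hT x (-T)
  rw [show -T + T = (0:ℝ) from by ring] at hy
  have : f y = 0 := hfIcc ⟨hy.1, hy.2.le⟩
  rw [hxy, this]
  rfl
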